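/- Let R be a finitely generated subring of k. Then for all sufficiently large prime numbers p there exists a ring homomorphism ψ: R → F̄_p, the algebraic closure of the field with p elements. -/

import Mathlib

open TensorProduct

open FirstOrder Field Ring Language in
/-- Let `R` be a finitely generated subring of an algebraically closed field `k` of
characteristic zero.  Then for all sufficiently large primes `p` there exists a ring
homomorphism `ψ : R → F̄_p`. -/
theorem exists_hom_to_algebraic_closure_zmod_for_large_primes
    (k : Type) [Field k] [IsAlgClosed k] [CharZero k]
    (R : Subring k) (hfg : ∃ s : Finset k, Subring.closure (s : Set k) = R) :
    ∃ N : ℕ, ∀ p : ℕ, ∀ hp : p.Prime, N ≤ p →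
      haveI : Fact p.Prime := ⟨hp⟩
      Nonempty (R →+* AlgebraicClosure (ZMod p)) := by
  classical
  obtain ⟨s, hs⟩ := hfg
  set σ := {x // x ∈ s}
  let v : σ → k := fun x => (x : k)
  let f : FreeCommRing σ →+* k := FreeCommRing.lift v
  -- the range of `f` is `R`
  have hrange : f.range = R := by
    rw [← hs]
    apply le_antisymm
    · rintro _ ⟨x, rfl⟩
      induction x using FreeCommRing.induction_on with
      | neg_one => rw [map_neg, map_one]; exact neg_mem (one_mem _)
      | of b => simpa [f, v] using Subring.subset_closure b.2
      | add x y hx hy => simpa [map_add] using add_mem hx hy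
      | mul x y hx hy => simpa [map_mul] using mul_mem hx hy
    · rw [Subring.closure_le]
      rintro x hx
      exact ⟨FreeCommRing.of ⟨x, hx⟩, FreeCommRing.lift_of _ _⟩
  haveI : IsNoetherianRing (FreeCommRing σ) :=
    isNoetherianRing_of_ringEquiv _ (freeCommRingEquivMvPolynomialInt σ).symm
  obtain ⟨t, ht⟩ := IsNoetherian.noetherian (RingHom.ker f)
  -- the sentence saying the system of equations `g = 0`, `g ∈ t`, has a solution
  let φ : Language.ring.Sentence :=
    Formula.iExs (β := σ)
      (BoundedFormula.iInf fun g : t =>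
        Term.equal ((termOfFreeCommRing (g : FreeCommRing σ)).relabel (Sum.inr : σ → Empty ⊕ σ))
          ((termOfFreeCommRing 0).relabel (Sum.inr : σ → Empty ⊕ σ)))
  have hφ : ∀ (M : Type) [CommRing M] [CompatibleRing M],
      (M ⊨ φ ↔ ∃ w : σ → M, ∀ g ∈ t, FreeCommRing.lift w g = 0) := by
    intro M _ _
    simp [φ, Sentence.Realize, Formula.Realize, Term.equal,
      BoundedFormula.realize_iInf, Formula.realize_iExs]
    exact Iff.rfl
  letI := compatibleRingOfRing k
  haveI : CharP k 0 := CharP.ofCharZero k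
  have hk : k ⊨ φ := (hφ k).2 ⟨v, fun g hg => by
    have hgker : g ∈ RingHom.ker f := by
      rw [← ht]; exact Ideal.subset_span hg
    exact hgker⟩
  have hACF0 : Theory.ACF 0 ⊨ᵇ φ := by
    rcases (ACF_isComplete (Or.inr rfl)).2 φ with h | h
    · exact h
    · exfalso
      have h2 := Theory.models_sentence_iff.1 h ⟨k⟩
      rw [Sentence.realize_not] at h2
      exact h2 hk
  have hfin := finite_ACF_prime_not_realize_of_ACF_zero_realize φ hACF0
  refine ⟨(hfin.toFinset.image (fun q : Nat.Primes => (q : ℕ))).sup id + 1, ?_⟩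
  intro p hp hNp
  haveI : Fact p.Prime := ⟨hp⟩
  have hgood : Theory.ACF p ⊨ᵇ φ := by
    by_contra h
    have h1 : (⟨p, hp⟩ : Nat.Primes) ∈ hfin.toFinset := hfin.mem_toFinset.2 h
    have h2 : p ≤ (hfin.toFinset.image (fun q : Nat.Primes => (q : ℕ))).sup id :=
      Finset.le_sup (f := id) (Finset.mem_image_of_mem _ h1)
    omega
  letI := compatibleRingOfRing (AlgebraicClosure (ZMod p))
  haveI : CharP (AlgebraicClosure (ZMod p)) p :=
    charP_of_injective_algebraMap
      (RingHom.injective (algebraMap (ZMod p) (AlgebraicClosure (ZMod p)))) p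
  have hmodel : (AlgebraicClosure (ZMod p)) ⊨ φ :=
    Theory.models_sentence_iff.1 hgood ⟨AlgebraicClosure (ZMod p)⟩
  obtain ⟨w, hw⟩ := (hφ _).1 hmodel
  let χ : FreeCommRing σ →+* AlgebraicClosure (ZMod p) := FreeCommRing.lift w
  have hker : RingHom.ker f ≤ RingHom.ker χ := by
    rw [← ht, Submodule.span_le]
    intro g hg
    exact hw g hg
  let q1 : FreeCommRing σ ⧸ RingHom.ker f →+* AlgebraicClosure (ZMod p) :=
    Ideal.Quotient.lift _ χ fun a ha => hker ha
  let e2 : (FreeCommRing σ ⧸ RingHom.ker f) ≃+* f.range :=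
    (Ideal.quotEquivOfEq (RingHom.ker_rangeRestrict f).symm).trans
      (RingHom.quotientKerEquivOfSurjective f.rangeRestrict_surjective)
  exact ⟨q1.comp (((RingEquiv.subringCongr hrange).symm.trans e2.symm).toRingHom)⟩
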